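/- (Conditional mean of the deformed $q$-multinomial components) Let $0<q<1$, $\theta_1,\ldots,\theta_k>0$, $n\in\mathbb{N}$, $k\ge 2$, and let $(X_1,\ldots,X_k)$ follow the $q$-multinomial distribution of the first kind. Then for each $j=2,\ldots,k$ and each $(x_1,\ldots,x_{j-1})$ with $s_{j-1}=\sum_{i=1}^{j-1}x_i\le n$, the conditional mean of the deformed variable $[X_j]_{1/q}$ given $X_1=x_1,\ldots,X_{j-1}=x_{j-1}$ is $E\big([X_j]_{1/q}\mid X_1=x_1,\ldots,X_{j-1}=x_{j-1}\big) = [n-s_{j-1}]_q\,\frac{\theta_j}{1+\theta_j q^{\,n-s_{j-1}-1}}$; that is, $\sum_{x_j=0}^{n-s_{j-1}} [x_j]_{1/q}\binom{n-s_{j-1}}{x_j}_q \frac{\theta_j^{x_j} q^{\binom{x_j}{2}}}{\prod_{i=1}^{n-s_{j-1}}(1+\theta_j q^{i-1})} = [n-s_{j-1}]_q\,\frac{\theta_j}{1+\theta_j q^{\,n-s_{j-1}-1}}$. -/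

import Mathlib

open scoped BigOperators

/-- The `q`-factorial `[n]_q! = ∏_{k=1}^n (1-q^k)/(1-q)`. -/
noncomputable def qFact (q : ℝ) (n : ℕ) : ℝ :=
  ∏ k ∈ Finset.range n, (1 - q ^ (k + 1)) / (1 - q)

/-- The `q`-binomial coefficient. -/
noncomputable def qBinom (q : ℝ) (n x : ℕ) : ℝ :=
  qFact q n / (qFact q x * qFact q (n - x))

/-- The `q`-number `[n]_q = (1-q^n)/(1-q)`. -/
noncomputable def qNat (q : ℝ) (n : ℕ) : ℝ := (1 - q ^ n) / (1 - q)

/-- The deformed value `[x]_{1/q} = (q^{-x}-1)/(q^{-1}-1)`. -/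
noncomputable def qDef (q : ℝ) (x : ℕ) : ℝ := (q⁻¹ ^ x - 1) / (q⁻¹ - 1)


lemma qFact_pos {q : ℝ} (hq0 : 0 < q) (hq1 : q < 1) (n : ℕ) : 0 < qFact q n := by
  apply Finset.prod_pos
  intro k _
  have h : q ^ (k+1) < 1 := pow_lt_one₀ hq0.le hq1 (Nat.succ_ne_zero k)
  exact div_pos (by linarith) (by linarith)

lemma qFact_succ (q : ℝ) (n : ℕ) : qFact q (n+1) = qFact q n * ((1 - q ^ (n+1)) / (1 - q)) :=
  Finset.prod_range_succ _ n

lemma qFact_zero (q : ℝ) : qFact q 0 = 1 := Finset.prod_range_zero _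

lemma qBinom_zero {q : ℝ} (hq0 : 0 < q) (hq1 : q < 1) (m : ℕ) : qBinom q m 0 = 1 := by
  unfold qBinom
  rw [Nat.sub_zero, qFact_zero, one_mul, div_self (qFact_pos hq0 hq1 m).ne']

lemma qBinom_self {q : ℝ} (hq0 : 0 < q) (hq1 : q < 1) (m : ℕ) : qBinom q m m = 1 := by
  unfold qBinom
  rw [Nat.sub_self, qFact_zero, mul_one, div_self (qFact_pos hq0 hq1 m).ne']

lemma pascal {q : ℝ} (hq0 : 0 < q) (hq1 : q < 1) {u m : ℕ} (hu : u < m) :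
    qBinom q (m+1) (u+1) = qBinom q m (u+1) + q ^ (m-u) * qBinom q m u := by
  obtain ⟨v, rfl⟩ : ∃ v, m = u + (v + 1) := ⟨m - u - 1, by omega⟩
  have e1 : u + (v+1) + 1 - (u+1) = v + 1 := by omega
  have e2 : u + (v+1) - (u+1) = v := by omega
  have e3 : u + (v+1) - u = v + 1 := by omega
  unfold qBinom
  rw [e1, e2, e3]
  have h1 : u + (v+1) + 1 = (u + v + 1) + 1 := by omega
  have h2 : u + (v+1) = (u + v) + 1 := by omega
  rw [h1, h2, qFact_succ q (u+v+1), qFact_succ q (u+v), qFact_succ q v, qFact_succ q u]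
  have hf := fun n => (qFact_pos hq0 hq1 n).ne'
  have hq : (1:ℝ) - q ≠ 0 := by intro h; linarith
  have hv1 : (1:ℝ) - q ^ (v+1) ≠ 0 := by
    have : q ^ (v+1) < 1 := pow_lt_one₀ hq0.le hq1 (Nat.succ_ne_zero v); intro h; linarith
  have hu1 : (1:ℝ) - q ^ (u+1) ≠ 0 := by
    have : q ^ (u+1) < 1 := pow_lt_one₀ hq0.le hq1 (Nat.succ_ne_zero u); intro h; linarith
  field_simp [hf u, hf v, hf (u+v), hq, hv1, hu1]
  ring

lemma triangle_succ (u : ℕ) : (u+1) * u / 2 = u * (u-1) / 2 + u := by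
  have h := Nat.choose_succ_succ u 1
  rw [Nat.choose_two_right, Nat.choose_two_right, Nat.choose_one_right] at h
  simpa [Nat.add_comm] using h

lemma rothe {q : ℝ} (hq0 : 0 < q) (hq1 : q < 1) (θ : ℝ) :
    ∀ m, ∑ t ∈ Finset.range (m+1), qBinom q m t * q ^ (t*(t-1)/2) * θ ^ t
      = ∏ i ∈ Finset.range m, (1 + θ * q ^ i) := by
  intro m
  induction m with
  | zero => simp [qBinom_zero hq0 hq1]
  | succ m ih =>
    have key : ∀ u ∈ Finset.range m,
        qBinom q (m+1) (u+1) * q ^ ((u+1)*((u+1)-1)/2) * θ ^ (u+1)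
        = qBinom q m (u+1) * q ^ ((u+1)*((u+1)-1)/2) * θ ^ (u+1)
          + θ * q ^ m * (qBinom q m u * q ^ (u*(u-1)/2) * θ ^ u) := by
      intro u hu
      have hu' := Finset.mem_range.mp hu
      rw [pascal hq0 hq1 hu']
      simp only [Nat.add_sub_cancel]
      have hpow : q ^ (m-u) * q ^ ((u+1)*u/2) = q ^ m * q ^ (u*(u-1)/2) := by
        rw [← pow_add, ← pow_add, triangle_succ]
        congr 1; omega
      linear_combination (qBinom q m u * θ ^ (u+1)) * hpow
    rw [Finset.sum_range_succ', Finset.sum_range_succ, Finset.sum_congr rfl key,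
      Finset.sum_add_distrib, ← Finset.mul_sum]
    have hfm : qBinom q (m+1) (m+1) * q ^ ((m+1)*((m+1)-1)/2) * θ ^ (m+1)
        = θ * q ^ m * (qBinom q m m * q ^ (m*(m-1)/2) * θ ^ m) := by
      rw [qBinom_self hq0 hq1, qBinom_self hq0 hq1]
      simp only [Nat.add_sub_cancel]
      rw [triangle_succ, pow_add]
      ring
    have hf0 : qBinom q (m+1) 0 * q ^ (0*(0-1)/2) * θ ^ 0
        = qBinom q m 0 * q ^ (0*(0-1)/2) * θ ^ 0 := by
      rw [qBinom_zero hq0 hq1, qBinom_zero hq0 hq1]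
    rw [hfm, hf0, Finset.prod_range_succ, ← ih]
    have hA : ∑ t ∈ Finset.range (m+1), qBinom q m t * q ^ (t*(t-1)/2) * θ ^ t
        = (∑ u ∈ Finset.range m, qBinom q m (u+1) * q ^ ((u+1)*((u+1)-1)/2) * θ ^ (u+1))
          + qBinom q m 0 * q ^ (0*(0-1)/2) * θ ^ 0 := Finset.sum_range_succ' _ m
    have hB : ∑ t ∈ Finset.range (m+1), qBinom q m t * q ^ (t*(t-1)/2) * θ ^ t
        = (∑ u ∈ Finset.range m, qBinom q m u * q ^ (u*(u-1)/2) * θ ^ u)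
          + qBinom q m m * q ^ (m*(m-1)/2) * θ ^ m := Finset.sum_range_succ _ m
    linear_combination -hA - θ * q ^ m * hB

lemma qBinom_mul_qNat {q : ℝ} (hq0 : 0 < q) (hq1 : q < 1) {u m : ℕ} (hu : u ≤ m) :
    qBinom q (m+1) (u+1) * qNat q (u+1) = qNat q (m+1) * qBinom q m u := by
  obtain ⟨v, rfl⟩ : ∃ v, m = u + v := ⟨m - u, by omega⟩
  have e1 : u + v + 1 - (u+1) = v := by omega
  have e2 : u + v - u = v := by omega
  unfold qBinom qNat
  rw [e1, e2, qFact_succ q (u+v), qFact_succ q u]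
  have hf := fun n => (qFact_pos hq0 hq1 n).ne'
  have hq : (1:ℝ) - q ≠ 0 := by intro h; linarith
  have hu1 : (1:ℝ) - q ^ (u+1) ≠ 0 := by
    have : q ^ (u+1) < 1 := pow_lt_one₀ hq0.le hq1 (Nat.succ_ne_zero u); intro h; linarith
  field_simp [hf u, hf v, hf (u+v), hq, hu1]

lemma qDef_succ {q : ℝ} (hq0 : 0 < q) (hq1 : q < 1) (u : ℕ) :
    qDef q (u+1) = (q ^ u)⁻¹ * qNat q (u+1) := by
  unfold qDef qNat
  have hq : q ≠ 0 := hq0.ne'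
  have hq' : (1:ℝ) - q ≠ 0 := by intro h; linarith
  have hd : q⁻¹ - 1 ≠ 0 := by
    rw [inv_eq_one_div, div_sub' hq, div_ne_zero_iff]
    exact ⟨by intro h; linarith, hq⟩
  field_simp
  rw [div_pow, one_pow]
  field_simp
  ring

lemma mean_sum {q : ℝ} (hq0 : 0 < q) (hq1 : q < 1) (θ : ℝ) (m : ℕ) :
    ∑ t ∈ Finset.range (m+1), qDef q t * (qBinom q m t * q ^ (t*(t-1)/2) * θ ^ t)
      = qNat q m * θ * ∏ i ∈ Finset.range (m-1), (1 + θ * q ^ i) := by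
  rcases m with _ | m
  · simp [qDef, qNat]
  · have key : ∀ u ∈ Finset.range (m+1),
        qDef q (u+1) * (qBinom q (m+1) (u+1) * q ^ ((u+1)*((u+1)-1)/2) * θ ^ (u+1))
        = qNat q (m+1) * θ * (qBinom q m u * q ^ (u*(u-1)/2) * θ ^ u) := by
      intro u hu
      have hu' : u ≤ m := Nat.lt_succ_iff.mp (Finset.mem_range.mp hu)
      rw [qDef_succ hq0 hq1]
      simp only [Nat.add_sub_cancel]
      have hpow : q ^ ((u+1)*u/2) = q ^ (u*(u-1)/2) * q ^ u := by
        rw [triangle_succ, pow_add]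
      have hmul := qBinom_mul_qNat hq0 hq1 hu'
      rw [hpow]
      have hqu : (q : ℝ) ^ u ≠ 0 := pow_ne_zero u hq0.ne'
      field_simp
      linear_combination (θ * θ ^ u) * hmul
    rw [Finset.sum_range_succ', Finset.sum_congr rfl key]
    have h0 : qDef q 0 = 0 := by simp [qDef]
    rw [h0, zero_mul, add_zero, ← Finset.mul_sum, rothe hq0 hq1 θ m]
    simp only [Nat.add_sub_cancel]

/-- **Conditional mean of the deformed q-multinomial components**: in the q-multinomial
distribution of the first kind, the conditional distribution of `X_j` given
`X_1 = x_1, …, X_{j-1} = x_{j-1}` is q-binomial of the first kind with parameters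
`n - s_{j-1}` and `θ_j`, and the conditional mean of `[X_j]_{1/q}` is
`[n - s_{j-1}]_q θ_j / (1 + θ_j q^{n - s_{j-1} - 1})`, where `s_{j-1} = ∑_{i<j} x_i`. -/
theorem qMultinomial_conditional_deformed_mean (q : ℝ) (hq0 : 0 < q) (hq1 : q < 1)
    (k : ℕ) (hk : 2 ≤ k) (θ : Fin k → ℝ) (hθ : ∀ j, 0 < θ j) (n : ℕ)
    (j : Fin k) (hj : 1 ≤ (j : ℕ)) (x : Fin k → ℕ)
    (hs : ∑ i ∈ Finset.univ.filter (· < j), x i ≤ n) :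
    ∑ t ∈ Finset.range (n - (∑ i ∈ Finset.univ.filter (· < j), x i) + 1),
      qDef q t * (qBinom q (n - ∑ i ∈ Finset.univ.filter (· < j), x i) t *
        q ^ (t * (t - 1) / 2) * θ j ^ t /
        ∏ i ∈ Finset.range (n - ∑ i ∈ Finset.univ.filter (· < j), x i), (1 + θ j * q ^ i)) =
      qNat q (n - ∑ i ∈ Finset.univ.filter (· < j), x i) *
        (θ j / (1 + θ j * q ^ ((n : ℤ) - (∑ i ∈ Finset.univ.filter (· < j), (x i : ℤ)) - 1))) := by
  have hθj : 0 < θ j := hθ j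
  have hz : (∑ i ∈ Finset.univ.filter (· < j), (x i : ℤ))
      = ((∑ i ∈ Finset.univ.filter (· < j), x i : ℕ) : ℤ) := by push_cast; rfl
  rw [hz]
  generalize hs_eq : (∑ i ∈ Finset.univ.filter (· < j), x i) = s at *
  have hrw : ∀ t ∈ Finset.range (n - s + 1),
      qDef q t * (qBinom q (n - s) t * q ^ (t*(t-1)/2) * θ j ^ t /
        ∏ i ∈ Finset.range (n - s), (1 + θ j * q ^ i))
      = qDef q t * (qBinom q (n - s) t * q ^ (t*(t-1)/2) * θ j ^ t) *
        (∏ i ∈ Finset.range (n - s), (1 + θ j * q ^ i))⁻¹ := by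
    intro t _; rw [div_eq_mul_inv]; ring
  rw [Finset.sum_congr rfl hrw, ← Finset.sum_mul, mean_sum hq0 hq1 (θ j) (n - s)]
  have hP : ∀ N : ℕ, (0:ℝ) < ∏ i ∈ Finset.range N, (1 + θ j * q ^ i) := by
    intro N
    apply Finset.prod_pos
    intro i _
    positivity
  rcases Nat.eq_zero_or_pos (n - s) with h0 | hpos
  · rw [h0]
    simp [qNat]
  · obtain ⟨m', hm'⟩ : ∃ m', n - s = m' + 1 := ⟨n - s - 1, by omega⟩
    have he : (n : ℤ) - (s : ℤ) - 1 = (m' : ℤ) := by omega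
    rw [hm', he, zpow_natCast, Finset.prod_range_succ]
    have h1 : (0:ℝ) < ∏ i ∈ Finset.range m', (1 + θ j * q ^ i) := hP m'
    have h2 : (0:ℝ) < 1 + θ j * q ^ m' := by positivity
    simp only [Nat.add_sub_cancel]
    field_simp
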